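/- Let {V_{ε^k} : 0 ≤ k ≤ m-1} be a partition of U_m^n, let H_{ε^k} be the induced subgraph of the Hamming graph H(n,m) on V_{ε^k}, and let H'_{ε^k} be the induced subgraph of H(n,m) on ρ(V_{ε^k}). Then (m-1)·n − min{δ(H_{ε^k}) : 0 ≤ k ≤ m-1} ≥ max{Δ(H'_{ε^k}) : 0 ≤ k ≤ m-1}. -/

import Mathlib

open scoped Classical

noncomputable section

/-- The primitive `m`-th root of unity `ε = e^{2πi/m}`. -/
def primRoot (m : ℕ) : ℂ := Complex.exp (2 * Real.pi * Complex.I / m)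

/-- The bijection `k ↦ ε^k` from `ZMod m` onto the set `U_m` of `m`-th roots of unity;
vectors of `U_m^n` are modelled by their exponent vectors in `(ZMod m)^n`. -/
def uRoot (m : ℕ) (k : ZMod m) : ℂ := primRoot m ^ k.val

/-- `F` represents the `m`-ary function `U_m^n → U_m` given in exponents by `g`,
i.e. the function `(ε^{x 1}, …, ε^{x n}) ↦ ε^{g x}`. -/
def RepresentsU (m n : ℕ) (F : MvPolynomial (Fin n) ℂ)
    (g : (Fin n → ZMod m) → ZMod m) : Prop :=
  ∀ x : Fin n → ZMod m, MvPolynomial.eval (fun i => uRoot m (x i)) F = uRoot m (g x)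

/-- Degree of the `m`-ary function `U_m^n → U_m` given in exponents by `g`. -/
def degU (m n : ℕ) (g : (Fin n → ZMod m) → ZMod m) : ℕ :=
  sInf {d | ∃ F : MvPolynomial (Fin n) ℂ, RepresentsU m n F g ∧ F.totalDegree = d}

/-- Local sensitivity of the `m`-ary function `U_m^n → U_m` given in exponents by `g`. -/
def localSensU (m n : ℕ) [NeZero m] (g : (Fin n → ZMod m) → ZMod m)
    (x : Fin n → ZMod m) : ℕ :=
  (Finset.univ.filter fun y : Fin n → ZMod m => hammingDist x y = 1 ∧ g y ≠ g x).card

/-- Sensitivity of the `m`-ary function `U_m^n → U_m` given in exponents by `g`. -/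
def sensU (m n : ℕ) [NeZero m] (g : (Fin n → ZMod m) → ZMod m) : ℕ :=
  Finset.univ.sup (localSensU m n g)

/-- Degree of the vertex `v` in the subgraph of the Hamming graph induced on `V`:
the number of vertices of `V` at Hamming distance exactly `1` from `v`. -/
def indDeg {ι α : Type*} [Fintype ι] (V : Finset (ι → α)) (v : ι → α) : ℕ :=
  (V.filter fun w => hammingDist v w = 1).card

/-- Minimum degree `δ` of the subgraph of the Hamming graph induced on `V`
(it is `⊤ = +∞` for the empty graph). -/
def minDeg {ι α : Type*} [Fintype ι] (V : Finset (ι → α)) : ℕ∞ :=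
  V.inf fun v => (indDeg V v : ℕ∞)

/-- Maximum degree `Δ` of the subgraph of the Hamming graph induced on `V`. -/
def maxDeg {ι α : Type*} [Fintype ι] (V : Finset (ι → α)) : ℕ :=
  V.sup fun v => indDeg V v

/-- The rotation `ρ` applied to the part `V k` of a partition of `U_m^n` (in exponent
coordinates): `x ∈ ρ(V)_k` iff `x ∈ C_{ε^j} ∩ V_{ε^{k-j}}` for some `j`, where
`C_{ε^j}` consists of the vertices whose entries multiply to `ε^j`, i.e. whose exponents
sum to `j`. -/
def rho (m n : ℕ) [NeZero m] (V : ZMod m → Finset (Fin n → ZMod m)) (k : ZMod m) :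
    Finset (Fin n → ZMod m) :=
  Finset.univ.filter fun x => x ∈ V (k - ∑ i, x i)

section Aux
open Finset

lemma dist_one_exists {n : ℕ} {α : Type*} [DecidableEq α] {x y : Fin n → α}
    (h : (univ.filter fun i => x i ≠ y i).card = 1) :
    ∃ a, (univ.filter fun i => x i ≠ y i) = {a} :=
  Finset.card_eq_one.mp h

lemma nbhd_card_le (m n : ℕ) [NeZero m] (hn : 1 ≤ n) (x : Fin n → ZMod m) :
    ((univ : Finset (Fin n → ZMod m)).filter fun y =>
      (univ.filter fun i => x i ≠ y i).card = 1).card ≤ (m - 1) * n := by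
  classical
  set T : Finset (Fin n × ZMod m) := univ.filter fun p => ¬ p.2 = x p.1 with hT
  have h1 : (univ.filter fun p : Fin n × ZMod m => p.2 = x p.1)
      = univ.image fun i => (i, x i) := by
    ext ⟨a, b⟩
    simp [Prod.ext_iff, eq_comm]
  have h2 : (univ.filter fun p : Fin n × ZMod m => p.2 = x p.1).card = n := by
    rw [h1, Finset.card_image_of_injective _ (fun i j h => (Prod.ext_iff.mp h).1),
      Finset.card_univ, Fintype.card_fin]
  have h3 := Finset.card_filter_add_card_filter_not
    (s := (univ : Finset (Fin n × ZMod m))) (p := fun p => p.2 = x p.1)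
  have hu : (univ : Finset (Fin n × ZMod m)).card = m * n := by
    simp [Finset.card_univ, ZMod.card, Nat.mul_comm]
  have hmn : (m - 1) * n = m * n - n := by rw [Nat.sub_mul, one_mul]
  have hTcard : T.card = (m - 1) * n := by
    rw [hT]; omega
  rw [← hTcard]
  apply Finset.card_le_card_of_injOn (f := fun y : Fin n → ZMod m =>
      if h : ∃ a, (univ.filter fun i => x i ≠ y i) = {a} then (h.choose, y h.choose)
      else (⟨0, hn⟩, x ⟨0, hn⟩))
  · intro y hy
    rw [mem_coe, mem_filter] at hy
    have he := dist_one_exists hy.2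
    simp only [dif_pos he]
    have key : ∀ b : Fin n, (univ.filter fun i => x i ≠ y i) = {b} → x b ≠ y b := by
      intro b hb
      have hmem : b ∈ univ.filter fun i => x i ≠ y i := by
        rw [hb]; exact mem_singleton_self b
      exact (mem_filter.mp hmem).2
    have hne := key he.choose he.choose_spec
    simp only [hT, mem_coe, mem_filter, mem_univ, true_and]
    exact fun hc => hne hc.symm
  · intro y₁ hy₁ y₂ hy₂ heq
    simp only [coe_filter, Set.mem_setOf_eq] at hy₁ hy₂
    have he₁ := dist_one_exists hy₁.2
    have he₂ := dist_one_exists hy₂.2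
    dsimp only at heq
    rw [dif_pos he₁, dif_pos he₂, Prod.ext_iff] at heq
    obtain ⟨ha, hv⟩ := heq
    dsimp only at ha hv
    funext j
    by_cases hj : j = he₁.choose
    · subst hj
      rw [show he₂.choose = he₁.choose from ha.symm] at hv
      exact hv
    · have n1 : x j = y₁ j := by
        by_contra hc
        have : j ∈ univ.filter fun i => x i ≠ y₁ i := by simp [hc]
        rw [he₁.choose_spec] at this
        exact hj (mem_singleton.mp this)
      have n2 : x j = y₂ j := by
        by_contra hc
        have : j ∈ univ.filter fun i => x i ≠ y₂ i := by simp [hc]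
        rw [he₂.choose_spec, ← ha] at this
        exact hj (mem_singleton.mp this)
      rw [← n1, ← n2]

lemma sum_ne_of_dist_one {n m : ℕ} [NeZero m] {x y : Fin n → ZMod m}
    (h : (univ.filter fun i => x i ≠ y i).card = 1) : (∑ i, y i) ≠ ∑ i, x i := by
  obtain ⟨a, ha⟩ := dist_one_exists h
  have hane : x a ≠ y a := by
    have : a ∈ univ.filter fun i => x i ≠ y i := by rw [ha]; exact mem_singleton_self _
    exact (mem_filter.mp this).2
  have hrest : ∀ j, j ≠ a → y j - x j = 0 := by
    intro j hj
    have : j ∉ univ.filter fun i => x i ≠ y i := by rw [ha]; simpa using hj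
    simp only [mem_filter, mem_univ, true_and, not_not] at this
    rw [this, sub_self]
  intro hc
  have : ∑ i, (y i - x i) = 0 := by rw [Finset.sum_sub_distrib, hc, sub_self]
  rw [Finset.sum_eq_single a (fun b _ hb => hrest b hb) (by simp)] at this
  exact hane ((sub_eq_zero.mp this).symm)

lemma indDeg_eq (m n : ℕ) [NeZero m] (W : Finset (Fin n → ZMod m)) (x : Fin n → ZMod m) :
    indDeg W x = (W.filter fun y => (univ.filter fun i => x i ≠ y i).card = 1).card := by
  simp only [indDeg, hammingDist, Finset.filter_congr_decidable]

lemma indDeg_le_bound (m n : ℕ) [NeZero m] (hn : 1 ≤ n)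
    (W : Finset (Fin n → ZMod m)) (x : Fin n → ZMod m) :
    indDeg W x ≤ (m - 1) * n := by
  rw [indDeg_eq]
  exact le_trans (Finset.card_le_card (Finset.filter_subset_filter _ (Finset.subset_univ W)))
    (nbhd_card_le m n hn x)

end Aux

open Finset in
theorem stmt19 (m n : ℕ) [NeZero m] (hm : 2 ≤ m) (hn : 1 ≤ n)
    (V : ZMod m → Finset (Fin n → ZMod m))
    (hpart : ∀ x : Fin n → ZMod m, ∃! k : ZMod m, x ∈ V k) :
    ((Finset.univ.sup fun k : ZMod m => maxDeg (rho m n V k) : ℕ) : ℕ∞) ≤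
      (((m - 1) * n : ℕ) : ℕ∞) -
        Finset.univ.inf (fun k : ZMod m => minDeg (V k)) := by
  classical
  set g : (Fin n → ZMod m) → ZMod m := fun x => (hpart x).choose with hgdef
  have hg : ∀ x : Fin n → ZMod m, x ∈ V (g x) := fun x => (hpart x).choose_spec.1
  have hgu : ∀ (x : Fin n → ZMod m) (k), x ∈ V k → k = g x :=
    fun x k h => (hpart x).choose_spec.2 k h
  have hmin : ∀ x : Fin n → ZMod m,
      Finset.univ.inf (fun k : ZMod m => minDeg (V k)) ≤ (indDeg (V (g x)) x : ℕ∞) := by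
    intro x
    refine le_trans (Finset.inf_le (Finset.mem_univ (g x))) ?_
    unfold minDeg
    exact Finset.inf_le (hg x)
  have key : ∀ (k : ZMod m) (x : Fin n → ZMod m), x ∈ rho m n V k →
      indDeg (rho m n V k) x + indDeg (V (g x)) x ≤ (m - 1) * n := by
    intro k x hx
    have hxg : g x = k - ∑ i, x i := by
      have : x ∈ V (k - ∑ i, x i) := by simpa [rho] using hx
      exact (hgu x _ this).symm
    rw [indDeg_eq, indDeg_eq]
    have hdisj : Disjoint
        ((rho m n V k).filter fun y => (univ.filter fun i => x i ≠ y i).card = 1)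
        ((V (g x)).filter fun y => (univ.filter fun i => x i ≠ y i).card = 1) := by
      rw [Finset.disjoint_left]
      intro w hw1 hw2
      rw [mem_filter] at hw1 hw2
      have hwg1 : g w = k - ∑ i, w i := by
        have : w ∈ V (k - ∑ i, w i) := by simpa [rho] using hw1.1
        exact (hgu w _ this).symm
      have hwg2 : g w = g x := (hgu w _ hw2.1).symm
      refine sum_ne_of_dist_one hw1.2 ?_
      have heq : k - ∑ i, w i = k - ∑ i, x i := by rw [← hwg1, hwg2, hxg]
      exact sub_right_injective heq
    rw [← Finset.card_union_of_disjoint hdisj]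
    refine le_trans (Finset.card_le_card ?_) (nbhd_card_le m n hn x)
    intro w hw
    rcases Finset.mem_union.mp hw with h | h <;>
      exact Finset.mem_filter.mpr ⟨Finset.mem_univ _, (Finset.mem_filter.mp h).2⟩
  have x1 : Fin n → ZMod m := fun _ => 0
  have hInt : Finset.univ.inf (fun k : ZMod m => minDeg (V k)) ≠ ⊤ :=
    ne_top_of_le_ne_top (ENat.coe_ne_top _) (hmin x1)
  apply ENat.le_sub_of_add_le_left hInt
  rw [add_comm]
  obtain ⟨k₀, -, hk₀⟩ := Finset.exists_mem_eq_sup (Finset.univ : Finset (ZMod m))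
    Finset.univ_nonempty (fun k => maxDeg (rho m n V k))
  rw [hk₀]
  by_cases hne : (rho m n V k₀).Nonempty
  · obtain ⟨x, hx, hxd⟩ := Finset.exists_mem_eq_sup _ hne
      (fun v => indDeg (rho m n V k₀) v)
    unfold maxDeg
    rw [hxd]
    calc (indDeg (rho m n V k₀) x : ℕ∞) + Finset.univ.inf (fun k : ZMod m => minDeg (V k))
        ≤ (indDeg (rho m n V k₀) x : ℕ∞) + (indDeg (V (g x)) x : ℕ∞) :=
          add_le_add le_rfl (hmin x)
      _ = ((indDeg (rho m n V k₀) x + indDeg (V (g x)) x : ℕ) : ℕ∞) := (Nat.cast_add _ _).symm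
      _ ≤ _ := Nat.cast_le.mpr (key k₀ x hx)
  · rw [Finset.not_nonempty_iff_eq_empty] at hne
    unfold maxDeg
    rw [hne, Finset.sup_empty]
    have x0 : Fin n → ZMod m := fun _ => 0
    calc ((⊥ : ℕ) : ℕ∞) + Finset.univ.inf (fun k : ZMod m => minDeg (V k))
        ≤ 0 + (indDeg (V (g x0)) x0 : ℕ∞) := by
          simpa using (hmin x0)
      _ ≤ _ := by
          rw [zero_add]
          exact Nat.cast_le.mpr (indDeg_le_bound m n hn (V (g x0)) x0)
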